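/- Let P, Q be probability measures with dQ/dP = r satisfying 0 < m ≤ r ≤ M. Define operators on L²₀(P) (mean-zero L²(P) functions) by A*v = (v − (∫ v·(1/r) dP)/(∫ (1/r) dP))·(1/r) and Bu = u·r − ∫ u·r dP. Then B∘A* and A*∘B are both the identity on L²₀(P), i.e. the gradient operator A* is a bounded isomorphism with inverse B. -/

import Mathlib

open MeasureTheory

/-- The gradient operator `A*` (converting influence functions into policy gradients
for the policy metric `∫ u v dQ`) is inverted on mean-zero `L²(P)` functions by
`B u = u * r - ∫ u * r dP`: both compositions are the identity (P-a.e.). -/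
theorem stmt7 {α : Type*} [MeasurableSpace α] (P Q : Measure α)
    [IsProbabilityMeasure P] [IsProbabilityMeasure Q]
    (r : α → ℝ) (hr : Measurable r)
    (hQ : Q = P.withDensity (fun x => ENNReal.ofReal (r x)))
    (m M : ℝ) (hm : 0 < m) (hbound : ∀ᵐ x ∂P, m ≤ r x ∧ r x ≤ M)
    (Astar B : (α → ℝ) → (α → ℝ))
    (hA : ∀ v, Astar v = fun x =>
      (v x - (∫ y, v y * (1 / r y) ∂P) / (∫ y, (1 / r y) ∂P)) * (1 / r x))
    (hB : ∀ u, B u = fun x => u x * r x - ∫ y, u y * r y ∂P) :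
    ∀ f : α → ℝ, MemLp f 2 P → (∫ x, f x ∂P = 0) →
      (B (Astar f) =ᵐ[P] f) ∧ (Astar (B f) =ᵐ[P] f) := by
  intro f hf hf0
  have hrpos : ∀ᵐ x ∂P, 0 < r x := by
    filter_upwards [hbound] with x hx using lt_of_lt_of_le hm hx.1
  have hne : ∀ᵐ x ∂P, r x ≠ 0 := by
    filter_upwards [hrpos] with x hx using ne_of_gt hx
  have hint_f : Integrable f P := hf.integrable one_le_two
  have hinv_meas : AEStronglyMeasurable (fun y => 1 / r y) P :=
    (measurable_const.div hr).aestronglyMeasurable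
  have hint_inv : Integrable (fun y => 1 / r y) P := by
    refine Integrable.mono' (integrable_const (1/m)) hinv_meas ?_
    filter_upwards [hbound, hrpos] with x hx hpos
    rw [Real.norm_eq_abs, abs_of_pos (by positivity)]
    exact one_div_le_one_div_of_le hm hx.1
  have hMpos : 0 < M := by
    obtain ⟨x, hx⟩ := hbound.exists
    exact lt_of_lt_of_le hm (hx.1.trans hx.2)
  have hint_fr : Integrable (fun y => f y * r y) P := by
    refine Integrable.mono' (hint_f.norm.mul_const M)
      (hf.aestronglyMeasurable.mul hr.aestronglyMeasurable) ?_
    filter_upwards [hbound, hrpos] with x hx hpos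
    rw [norm_mul]
    exact mul_le_mul_of_nonneg_left
      (by rw [Real.norm_eq_abs, abs_of_pos hpos]; exact hx.2) (norm_nonneg _)
  have hJ : 0 < ∫ y, 1 / r y ∂P := by
    have h1 : (1:ℝ)/M ≤ ∫ y, 1 / r y ∂P := by
      have := integral_mono_ae (integrable_const ((1:ℝ)/M)) hint_inv
        (by filter_upwards [hbound, hrpos] with x hx hpos
            exact one_div_le_one_div_of_le hpos hx.2)
      simpa [measure_univ] using this
    exact lt_of_lt_of_le (by positivity) h1
  constructor
  · rw [hB, hA]
    set c := (∫ y, f y * (1 / r y) ∂P) / (∫ y, (1 / r y) ∂P) with hc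
    have hI : ∫ y, (f y - c) * (1 / r y) * r y ∂P = -c := by
      have heq : ∀ᵐ y ∂P, (f y - c) * (1 / r y) * r y = f y - c := by
        filter_upwards [hne] with y hy
        field_simp
      rw [integral_congr_ae heq, integral_sub hint_f (integrable_const c),
        hf0, integral_const]
      simp
    filter_upwards [hne] with x hx

    rw [hI]
    field_simp
    ring
  · rw [hA, hB]
    set k := ∫ y, f y * r y ∂P with hk
    set J := ∫ y, (1 / r y) ∂P with hJdef
    have hnum : ∫ y, (f y * r y - k) * (1 / r y) ∂P = -(k * J) := by
      have heq : ∀ᵐ y ∂P, (f y * r y - k) * (1 / r y) = f y - k * (1 / r y) := by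
        filter_upwards [hne] with y hy
        field_simp
      rw [integral_congr_ae heq, integral_sub hint_f (hint_inv.const_mul k),
        hf0, integral_const_mul]
      ring
    filter_upwards [hne] with x hx

    rw [hnum]
    field_simp
    ring
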